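/- For all n > 2k ≥ 2, f_{2k+2}(n) ≤ Σ_{m=2k}^{n-2} f_{2k}(m). -/

import Mathlib

open Finset

/-- Edge set of the complete bipartite graph with parts `A` and `B`. -/
def bicliqueEdges {V : Type*} (A B : Finset V) : Set (Sym2 V) :=
  {e | ∃ a ∈ A, ∃ b ∈ B, e = s(a, b)}

/-- `f_2(G)`: minimum number of complete bipartite subgraphs needed to partition
the edge set of the graph `G`. -/
noncomputable def f2 {V : Type*} (G : SimpleGraph V) : ℕ :=
  sInf {m | ∃ A B : Fin m → Finset V,
    (∀ k, Disjoint (A k) (B k)) ∧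
    (∀ k, bicliqueEdges (A k) (B k) ⊆ G.edgeSet) ∧
    ∀ e ∈ G.edgeSet, ∃! k, e ∈ bicliqueEdges (A k) (B k)}

/-- Edge set of the complete `r`-partite `r`-uniform hypergraph with parts `P`. -/
def crossEdges {V : Type*} [DecidableEq V] {r : ℕ} (P : Fin r → Finset V) : Set (Finset V) :=
  {e | ∃ f : Fin r → V, (∀ i, f i ∈ P i) ∧ e = Finset.image f Finset.univ}

/-- `f_r(n)`: minimum number of complete `r`-partite `r`-uniform hypergraphs needed to
partition the edge set of the complete `r`-uniform hypergraph on `n` vertices. -/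
noncomputable def fr (r n : ℕ) : ℕ :=
  sInf {m | ∃ P : Fin m → Fin r → Finset (Fin n),
    (∀ k, Pairwise (Function.onFun Disjoint (P k))) ∧
    ∀ e : Finset (Fin n), e.card = r → ∃! k, e ∈ crossEdges (P k)}

/-- `g(G,H)`: minimum number of blocks (products of edge sets of complete
bipartite subgraphs of `G` and `H` respectively) needed to partition `E(G) × E(H)`. -/
noncomputable def gGH {V W : Type*} (G : SimpleGraph V) (H : SimpleGraph W) : ℕ :=
  sInf {m | ∃ A B : Fin m → Finset V, ∃ C D : Fin m → Finset W,
    (∀ k, Disjoint (A k) (B k)) ∧ (∀ k, Disjoint (C k) (D k)) ∧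
    (∀ k, bicliqueEdges (A k) (B k) ⊆ G.edgeSet) ∧
    (∀ k, bicliqueEdges (C k) (D k) ⊆ H.edgeSet) ∧
    ∀ p : Sym2 V × Sym2 W, p.1 ∈ G.edgeSet → p.2 ∈ H.edgeSet →
      ∃! k, p.1 ∈ bicliqueEdges (A k) (B k) ∧ p.2 ∈ bicliqueEdges (C k) (D k)}

/-- `g(n) = g(K_n, K_n)`. -/
noncomputable def gn (n : ℕ) : ℕ :=
  gGH (SimpleGraph.completeGraph (Fin n)) (SimpleGraph.completeGraph (Fin n))

private lemma crossEdges_cover {V : Type*} [DecidableEq V] {r : ℕ} {P : Fin r → Finset V}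
    {e : Finset V} (he : e ∈ crossEdges P) : ∀ v ∈ e, ∃ t, v ∈ P t := by
  obtain ⟨f, hf, rfl⟩ := he
  intro v hv
  simp only [Finset.mem_image, Finset.mem_univ, true_and] at hv
  obtain ⟨t, rfl⟩ := hv
  exact ⟨t, hf t⟩

private lemma cross_iff {V : Type*} [DecidableEq V] {r : ℕ} {P : Fin r → Finset V}
    (hd : Pairwise (Function.onFun Disjoint P)) {e : Finset V} (he : e.card = r) :
    e ∈ crossEdges P ↔ ∀ t, ∃ v ∈ e, v ∈ P t := by
  constructor
  · rintro ⟨f, hf, rfl⟩ t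
    exact ⟨f t, Finset.mem_image_of_mem f (mem_univ t), hf t⟩
  · intro h
    choose g hg1 hg2 using h
    have hginj : Function.Injective g := by
      intro a b hab
      by_contra hne
      exact (Finset.disjoint_left.mp (hd hne)) (hg2 a) (hab ▸ hg2 b)
    have hsub : image g univ ⊆ e := by
      intro v hv
      simp only [Finset.mem_image, Finset.mem_univ, true_and] at hv
      obtain ⟨t, rfl⟩ := hv
      exact hg1 t
    have heq : e = image g univ := by
      refine (Finset.eq_of_subset_of_card_le hsub ?_).symm
      rw [Finset.card_image_of_injective _ hginj, Finset.card_univ, Fintype.card_fin, he]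
    exact ⟨g, hg2, heq⟩

private lemma fr_set_nonempty (r n : ℕ) :
    {m | ∃ P : Fin m → Fin r → Finset (Fin n),
      (∀ k, Pairwise (Function.onFun Disjoint (P k))) ∧
      ∀ e : Finset (Fin n), e.card = r → ∃! k, e ∈ crossEdges (P k)}.Nonempty := by
  classical
  set E := {e : Finset (Fin n) // e.card = r} with hE
  let ε : Fin (Fintype.card E) ≃ E := (Fintype.equivFin E).symm
  refine ⟨Fintype.card E, fun j t => {((ε j).1.orderIsoOfFin (ε j).2 t : Fin n)}, ?_, ?_⟩
  · intro j
    intro t t' hne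
    simp only [Function.onFun, Finset.disjoint_singleton]
    intro hcontra
    exact hne (((ε j).1.orderIsoOfFin (ε j).2).injective (Subtype.ext hcontra))
  · intro e he
    have hd : ∀ j : Fin (Fintype.card E), Pairwise (Function.onFun Disjoint
        (fun t => ({((ε j).1.orderIsoOfFin (ε j).2 t : Fin n)} : Finset (Fin n)))) := by
      intro j t t' hne
      simp only [Function.onFun, Finset.disjoint_singleton]
      intro hcontra
      exact hne (((ε j).1.orderIsoOfFin (ε j).2).injective (Subtype.ext hcontra))
    refine ⟨ε.symm ⟨e, he⟩, ?_, ?_⟩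
    · beta_reduce
      rw [cross_iff (hd _) he]
      intro t
      refine ⟨((ε (ε.symm ⟨e, he⟩)).1.orderIsoOfFin (ε (ε.symm ⟨e, he⟩)).2 t : Fin n), ?_,
        Finset.mem_singleton_self _⟩
      have := ((ε (ε.symm ⟨e, he⟩)).1.orderIsoOfFin (ε (ε.symm ⟨e, he⟩)).2 t).2
      simp only [Equiv.apply_symm_apply] at this ⊢
      exact this
    · intro j hj
      have hsub : e ⊆ (ε j).1 := by
        intro v hv
        obtain ⟨t, ht⟩ := crossEdges_cover hj v hv
        rw [Finset.mem_singleton] at ht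
        rw [ht]
        exact ((ε j).1.orderIsoOfFin (ε j).2 t).2
      have : e = (ε j).1 := Finset.eq_of_subset_of_card_le hsub (by rw [(ε j).2, he])
      have : ε j = ⟨e, he⟩ := Subtype.ext this.symm
      rw [← this, Equiv.symm_apply_apply]

private noncomputable def frW (r n : ℕ) : Fin (fr r n) → Fin r → Finset (Fin n) :=
  (Nat.sInf_mem (fr_set_nonempty r n)).choose

private lemma frW_spec (r n : ℕ) :
    (∀ k, Pairwise (Function.onFun Disjoint (frW r n k))) ∧
    ∀ e : Finset (Fin n), e.card = r → ∃! k, e ∈ crossEdges (frW r n k) :=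
  (Nat.sInf_mem (fr_set_nonempty r n)).choose_spec

private def emb (n m : ℕ) (h : m ≤ n) : Fin m ↪ Fin n where
  toFun x := ⟨(x : ℕ) + (n - m), by have := x.isLt; omega⟩
  inj' a b hab := by
    simp only [Fin.mk.injEq] at hab
    exact Fin.ext (by omega)

@[simp] private lemma emb_val {n m : ℕ} (h : m ≤ n) (x : Fin m) :
    ((emb n m h x : Fin n) : ℕ) = (x : ℕ) + (n - m) := rfl

private def liftParts {r n m : ℕ} (h : m + 2 ≤ n) (Q : Fin r → Finset (Fin m)) :
    Fin (r + 2) → Finset (Fin n) := fun t =>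
  if h0 : (t : ℕ) = 0 then Finset.univ.filter (fun v => (v : ℕ) < n - 1 - m)
  else if h1 : (t : ℕ) = 1 then {⟨n - 1 - m, by omega⟩}
  else (Q ⟨(t : ℕ) - 2, by have := t.isLt; omega⟩).map (emb n m (by omega))

private lemma mem_liftParts_zero {r n m : ℕ} (h : m + 2 ≤ n) (Q : Fin r → Finset (Fin m))
    {t : Fin (r + 2)} (ht : (t : ℕ) = 0) {v : Fin n} :
    v ∈ liftParts h Q t ↔ (v : ℕ) < n - 1 - m := by
  simp [liftParts, ht]

private lemma mem_liftParts_one {r n m : ℕ} (h : m + 2 ≤ n) (Q : Fin r → Finset (Fin m))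
    {t : Fin (r + 2)} (ht : (t : ℕ) = 1) {v : Fin n} :
    v ∈ liftParts h Q t ↔ (v : ℕ) = n - 1 - m := by
  simp [liftParts, ht, Fin.ext_iff]

private lemma mem_liftParts_two {r n m : ℕ} (h : m + 2 ≤ n) (Q : Fin r → Finset (Fin m))
    {t : Fin (r + 2)} (ht0 : (t : ℕ) ≠ 0) (ht1 : (t : ℕ) ≠ 1) {v : Fin n} :
    v ∈ liftParts h Q t ↔
      ∃ x ∈ Q ⟨(t : ℕ) - 2, by have := t.isLt; omega⟩, emb n m (by omega) x = v := by
  simp [liftParts, ht0, ht1, Finset.mem_map]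


private lemma liftParts_pairwise {r n m : ℕ} (h : m + 2 ≤ n) {Q : Fin r → Finset (Fin m)}
    (hQ : Pairwise (Function.onFun Disjoint Q)) :
    Pairwise (Function.onFun Disjoint (liftParts h Q)) := by
  intro t t' hne
  rw [Function.onFun, Finset.disjoint_left]
  intro v hv hv'
  have htt' : (t : ℕ) ≠ (t' : ℕ) := fun hc => hne (Fin.ext hc)
  -- categorize
  by_cases h0 : (t : ℕ) = 0
  · have hvlt := (mem_liftParts_zero h Q h0).mp hv
    by_cases h0' : (t' : ℕ) = 0
    · exact htt' (h0.trans h0'.symm)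
    · by_cases h1' : (t' : ℕ) = 1
      · have := (mem_liftParts_one h Q h1').mp hv'
        omega
      · obtain ⟨x, _, rfl⟩ := (mem_liftParts_two h Q h0' h1').mp hv'
        simp only [emb_val] at hvlt
        omega
  · by_cases h1 : (t : ℕ) = 1
    · have hveq := (mem_liftParts_one h Q h1).mp hv
      by_cases h0' : (t' : ℕ) = 0
      · have := (mem_liftParts_zero h Q h0').mp hv'
        omega
      · by_cases h1' : (t' : ℕ) = 1
        · exact htt' (h1.trans h1'.symm)
        · obtain ⟨x, _, rfl⟩ := (mem_liftParts_two h Q h0' h1').mp hv'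
          simp only [emb_val] at hveq
          omega
    · obtain ⟨x, hx, rfl⟩ := (mem_liftParts_two h Q h0 h1).mp hv
      by_cases h0' : (t' : ℕ) = 0
      · have := (mem_liftParts_zero h Q h0').mp hv'
        simp only [emb_val] at this
        omega
      · by_cases h1' : (t' : ℕ) = 1
        · have := (mem_liftParts_one h Q h1').mp hv'
          simp only [emb_val] at this
          omega
        · obtain ⟨y, hy, hxy⟩ := (mem_liftParts_two h Q h0' h1').mp hv'
          have hxy' : y = x := (emb n m (by omega)).injective hxy
          subst hxy'
          have hidx : (⟨(t : ℕ) - 2, by have := t.isLt; omega⟩ : Fin r) ≠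
              ⟨(t' : ℕ) - 2, by have := t'.isLt; omega⟩ := by
            intro hc
            simp only [Fin.mk.injEq] at hc
            omega
          exact Finset.disjoint_left.mp (hQ hidx) hx hy

private lemma mem_lift_iff {r n m : ℕ} (h : m + 2 ≤ n) {Q : Fin r → Finset (Fin m)}
    (hQ : Pairwise (Function.onFun Disjoint Q)) {a s : Fin n} {e'' : Finset (Fin m)}
    (ha : (a : ℕ) < n - 1 - m) (hs : (s : ℕ) = n - 1 - m) (hcard : e''.card = r) :
    insert a (insert s (e''.map (emb n m (by omega)))) ∈ crossEdges (liftParts h Q) ↔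
      e'' ∈ crossEdges Q := by
  have hmn : m ≤ n := by omega
  have hhi : ∀ v ∈ e''.map (emb n m hmn), n - m ≤ (v : ℕ) := by
    intro v hv
    rw [Finset.mem_map] at hv
    obtain ⟨x, _, rfl⟩ := hv
    simp
  have hanm : a ∉ insert s (e''.map (emb n m hmn)) := by
    simp only [Finset.mem_insert]
    rintro (rfl | hmem)
    · omega
    · have := hhi a hmem; omega
  have hsnm : s ∉ e''.map (emb n m hmn) := by
    intro hmem
    have := hhi s hmem; omega
  have hecard : (insert a (insert s (e''.map (emb n m hmn)))).card = r + 2 := by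
    rw [Finset.card_insert_of_notMem hanm, Finset.card_insert_of_notMem hsnm,
      Finset.card_map, hcard]
  rw [cross_iff (liftParts_pairwise h hQ) hecard, cross_iff hQ hcard]
  constructor
  · intro hall t2
    have ht2 : ((t2 : ℕ) + 2) < r + 2 := by have := t2.isLt; omega
    obtain ⟨v, hv, hvmem⟩ := hall ⟨(t2 : ℕ) + 2, ht2⟩
    rw [mem_liftParts_two h Q (by simp) (by simp)] at hvmem
    obtain ⟨x, hxQ, rfl⟩ := hvmem
    have hidx : (⟨(t2 : ℕ) + 2 - 2, by have := t2.isLt; omega⟩ : Fin r) = t2 := by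
      exact Fin.ext (by simp)
    rw [hidx] at hxQ
    have hvhi : n - m ≤ ((emb n m hmn x : Fin n) : ℕ) := by simp
    simp only [Finset.mem_insert] at hv
    rcases hv with rfl | rfl | hv
    · simp only [emb_val] at ha; omega
    · simp only [emb_val] at hs; omega
    · rw [Finset.mem_map] at hv
      obtain ⟨y, hy, hyx⟩ := hv
      have : y = x := (emb n m hmn).injective hyx
      subst this
      exact ⟨y, hy, hxQ⟩
  · intro hall t
    by_cases h0 : (t : ℕ) = 0
    · exact ⟨a, Finset.mem_insert_self _ _, (mem_liftParts_zero h Q h0).mpr ha⟩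
    · by_cases h1 : (t : ℕ) = 1
      · exact ⟨s, Finset.mem_insert_of_mem (Finset.mem_insert_self _ _),
          (mem_liftParts_one h Q h1).mpr hs⟩
      · obtain ⟨x, hx, hxQ⟩ := hall ⟨(t : ℕ) - 2, by have := t.isLt; omega⟩
        refine ⟨emb n m hmn x, ?_, ?_⟩
        · exact Finset.mem_insert_of_mem (Finset.mem_insert_of_mem
            (Finset.mem_map_of_mem _ hx))
        · rw [mem_liftParts_two h Q h0 h1]
          exact ⟨x, hxQ, rfl⟩

private lemma decomp {n r : ℕ} {e : Finset (Fin n)} (he : e.card = r + 2) :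
    ∃ (m : ℕ) (hm : m + 2 ≤ n) (a s : Fin n) (e'' : Finset (Fin m)),
      (a : ℕ) < n - 1 - m ∧ (s : ℕ) = n - 1 - m ∧ e''.card = r ∧ r ≤ m ∧
      e = insert a (insert s (e''.map (emb n m (by omega)))) := by
  classical
  have hne : e.Nonempty := Finset.card_pos.mp (by omega)
  set a := e.min' hne with hadef
  have hae : a ∈ e := e.min'_mem hne
  have hc1 : (e.erase a).card = r + 1 := by
    rw [Finset.card_erase_of_mem hae, he]
    omega
  have hne1 : (e.erase a).Nonempty := Finset.card_pos.mp (by omega)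
  set s := (e.erase a).min' hne1 with hsdef
  have hse1 : s ∈ e.erase a := Finset.min'_mem _ hne1
  have hse : s ∈ e := Finset.mem_of_mem_erase hse1
  have hsa : s ≠ a := Finset.ne_of_mem_erase hse1
  have has : (a : ℕ) < (s : ℕ) := by
    have h1 : a ≤ s := e.min'_le s hse
    have : a ≠ s := fun hc => hsa hc.symm
    exact lt_of_le_of_ne (Fin.le_def.mp h1) (fun hc => this (Fin.ext hc))
  have hslt : (s : ℕ) < n := s.isLt
  set m := n - 1 - (s : ℕ) with hmdef
  have hm : m + 2 ≤ n := by omega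
  have hseq : (s : ℕ) = n - 1 - m := by omega
  have haval : (a : ℕ) < n - 1 - m := by omega
  set e2 := (e.erase a).erase s with he2def
  have hc2 : e2.card = r := by
    rw [he2def, Finset.card_erase_of_mem hse1, hc1]
    omega
  have hhi : ∀ v ∈ e2, n - m ≤ (v : ℕ) := by
    intro v hv
    have hv1 : v ∈ e.erase a := Finset.mem_of_mem_erase hv
    have hvs : v ≠ s := Finset.ne_of_mem_erase hv
    have : s ≤ v := Finset.min'_le _ v hv1
    have : (s : ℕ) < (v : ℕ) :=
      lt_of_le_of_ne (Fin.le_def.mp this) (fun hc => hvs (Fin.ext hc.symm))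
    omega
  have hmn : m ≤ n := by omega
  set e'' := Finset.univ.filter (fun x : Fin m => (emb n m hmn x) ∈ e2) with he''def
  have hmap : e''.map (emb n m (by omega)) = e2 := by
    ext v
    simp only [Finset.mem_map, he''def, Finset.mem_filter, Finset.mem_univ, true_and]
    constructor
    · rintro ⟨x, hx, rfl⟩
      exact hx
    · intro hv
      have h1 := hhi v hv
      have h2 := v.isLt
      refine ⟨⟨(v : ℕ) - (n - m), by omega⟩, ?_, ?_⟩
      · have : emb n m hmn ⟨(v : ℕ) - (n - m), by omega⟩ = v := Fin.ext (by simp; omega)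
        rw [this]; exact hv
      · exact Fin.ext (by simp; omega)
  have hc'' : e''.card = r := by
    have := congrArg Finset.card hmap
    rw [Finset.card_map] at this
    rw [this, hc2]
  refine ⟨m, hm, a, s, e'', haval, hseq, hc'', ?_, ?_⟩
  · calc r = e''.card := hc''.symm
    _ ≤ Fintype.card (Fin m) := Finset.card_le_univ e'' |>.trans (by simp)
    _ = m := by simp
  · rw [hmap, he2def, Finset.insert_erase hse1, Finset.insert_erase hae]

private lemma lift_structure {r n m : ℕ} (h : m + 2 ≤ n) {Q : Fin r → Finset (Fin m)}
    {e : Finset (Fin n)} (he : e ∈ crossEdges (liftParts h Q)) :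
    ∃ a ∈ e, ∃ s ∈ e, (a : ℕ) < n - 1 - m ∧ (s : ℕ) = n - 1 - m ∧
      ∀ v ∈ e, (v : ℕ) ≤ n - 1 - m → (v = a ∨ v = s) := by
  obtain ⟨f, hf, rfl⟩ := he
  have h0 : ((0 : Fin (r + 2)) : ℕ) = 0 := rfl
  have h1 : ((1 : Fin (r + 2)) : ℕ) = 1 := rfl
  refine ⟨f 0, Finset.mem_image_of_mem f (mem_univ _), f 1,
    Finset.mem_image_of_mem f (mem_univ _), ?_, ?_, ?_⟩
  · exact (mem_liftParts_zero h Q h0).mp (hf 0)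
  · exact (mem_liftParts_one h Q h1).mp (hf 1)
  · intro v hv hvle
    simp only [Finset.mem_image, Finset.mem_univ, true_and] at hv
    obtain ⟨t, rfl⟩ := hv
    by_cases ht0 : (t : ℕ) = 0
    · left; rw [show t = 0 from Fin.ext ht0]
    · by_cases ht1 : (t : ℕ) = 1
      · right; rw [show t = 1 from Fin.ext ht1]
      · exfalso
        obtain ⟨x, _, hx⟩ := (mem_liftParts_two h Q ht0 ht1).mp (hf t)
        rw [← hx] at hvle
        simp only [emb_val] at hvle
        omega

private lemma lift_lt_absurd {n : ℕ} {e : Finset (Fin n)} {i1 i2 : ℕ} (hlt : i1 < i2)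
    (H1 : ∃ a ∈ e, ∃ s ∈ e, (a : ℕ) < i1 ∧ (s : ℕ) = i1)
    (H2 : ∃ a ∈ e, ∃ s ∈ e, (a : ℕ) < i2 ∧ (s : ℕ) = i2 ∧
      ∀ v ∈ e, (v : ℕ) ≤ i2 → (v = a ∨ v = s)) : False := by
  obtain ⟨a1, ha1e, s1, hs1e, ha1, hs1⟩ := H1
  obtain ⟨a2, ha2e, s2, hs2e, ha2, hs2, huniq⟩ := H2
  have hA := huniq a1 ha1e (by omega)
  have hS := huniq s1 hs1e (by omega)
  rcases hA with rfl | rfl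
  · rcases hS with hx | rfl
    · have := congrArg Fin.val hx; omega
    · omega
  · omega

private lemma lift_m_unique {r n m₁ m₂ : ℕ} (h1 : m₁ + 2 ≤ n) (h2 : m₂ + 2 ≤ n)
    {Q1 : Fin r → Finset (Fin m₁)} {Q2 : Fin r → Finset (Fin m₂)} {e : Finset (Fin n)}
    (he1 : e ∈ crossEdges (liftParts h1 Q1)) (he2 : e ∈ crossEdges (liftParts h2 Q2)) :
    m₁ = m₂ := by
  obtain ⟨a1, ha1e, s1, hs1e, ha1, hs1, hu1⟩ := lift_structure h1 he1
  obtain ⟨a2, ha2e, s2, hs2e, ha2, hs2, hu2⟩ := lift_structure h2 he2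
  rcases Nat.lt_trichotomy (n - 1 - m₁) (n - 1 - m₂) with hlt | heq | hgt
  · exact absurd (lift_lt_absurd hlt ⟨a1, ha1e, s1, hs1e, ha1, hs1⟩
      ⟨a2, ha2e, s2, hs2e, ha2, hs2, hu2⟩) not_false
  · omega
  · exact absurd (lift_lt_absurd hgt ⟨a2, ha2e, s2, hs2e, ha2, hs2⟩
      ⟨a1, ha1e, s1, hs1e, ha1, hs1, hu1⟩) not_false

theorem stmt19 (k n : ℕ) (hk : 1 ≤ k) (hn : 2 * k < n) :
    fr (2 * k + 2) n ≤ ∑ m ∈ Finset.Icc (2 * k) (n - 2), fr (2 * k) m := by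
  classical
  set S := ∑ m ∈ Finset.Icc (2 * k) (n - 2), fr (2 * k) m with hS
  let T := Σ m : {x // x ∈ Finset.Icc (2 * k) (n - 2)}, Fin (fr (2 * k) m.1)
  have hcard : Fintype.card T = S := by
    simp only [T, Fintype.card_sigma, Fintype.card_fin, hS]
    exact Finset.sum_coe_sort _ _
  let ε : Fin S ≃ T := (finCongr hcard.symm).trans (Fintype.equivFin T).symm
  have hmle : ∀ σ : T, σ.1.1 + 2 ≤ n := by
    intro σ
    have := Finset.mem_Icc.mp σ.1.2
    omega
  let P : Fin S → Fin (2 * k + 2) → Finset (Fin n) :=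
    fun j => liftParts (hmle (ε j)) (frW (2 * k) (ε j).1.1 (ε j).2)
  refine Nat.sInf_le ⟨P, ?_, ?_⟩
  · intro j
    exact liftParts_pairwise _ ((frW_spec (2 * k) (ε j).1.1).1 (ε j).2)
  · intro e he
    obtain ⟨m, hm, a, s, e'', ha, hs, hc'', hrm, heq⟩ := decomp (r := 2 * k) he
    have hmIcc : m ∈ Finset.Icc (2 * k) (n - 2) := Finset.mem_Icc.mpr ⟨hrm, by omega⟩
    obtain ⟨j0, hj0, hj0u⟩ := (frW_spec (2 * k) m).2 e'' hc''
    have hcand : e ∈ crossEdges (liftParts hm (frW (2 * k) m j0)) := by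
      rw [heq]
      exact (mem_lift_iff hm ((frW_spec (2 * k) m).1 j0) ha hs hc'').mpr hj0
    refine ⟨ε.symm ⟨⟨m, hmIcc⟩, j0⟩, ?_, ?_⟩
    · show e ∈ crossEdges (liftParts (hmle (ε (ε.symm ⟨⟨m, hmIcc⟩, j0⟩)))
        (frW (2 * k) (ε (ε.symm ⟨⟨m, hmIcc⟩, j0⟩)).1.1 (ε (ε.symm ⟨⟨m, hmIcc⟩, j0⟩)).2))
      rw [ε.apply_symm_apply]
      exact hcand
    · intro j' hj'
      have hj'2 : e ∈ crossEdges (liftParts (hmle (ε j'))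
          (frW (2 * k) (ε j').1.1 (ε j').2)) := hj'
      rcases hεj : ε j' with ⟨⟨m', hmem'⟩, j1⟩
      rw [hεj] at hj'2
      have hm'm : m' = m := lift_m_unique (hmle ⟨⟨m', hmem'⟩, j1⟩) hm hj'2 hcand
      subst hm'm
      have hmem'' : e'' ∈ crossEdges (frW (2 * k) m' j1) := by
        rw [heq] at hj'2
        exact (mem_lift_iff (hmle ⟨⟨m', hmem'⟩, j1⟩)
          ((frW_spec (2 * k) m').1 j1) ha hs hc'').mp hj'2
      have hj1 : j1 = j0 := hj0u j1 hmem''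
      subst hj1
      rw [Equiv.eq_symm_apply, hεj]
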